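/- Suppose m₁ = m₂. Let x ∈ 𝒟 satisfy S(x) = x and let γ = (ξ, θ, α) be the solution of (*) with initial condition x. If there exist T ≠ 0 and k ∈ ℤ such that S(γ(T)) = γ(T) + (0, 0, 2πk), then the ξ and θ components of γ are periodic, and 2T is a period: ξ(t + 2T) = ξ(t) and θ(t + 2T) = θ(t) for all t ∈ ℝ. -/

import Mathlib

/-- The constant `m = m₁ + m₂ + 2/g`. -/
noncomputable def mconst (g m₁ m₂ : ℕ) : ℝ := (m₁ : ℝ) + (m₂ : ℝ) + 2 / (g : ℝ)

/-- The angle `θ* = arctan √(m₁/m₂)`. -/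
noncomputable def thetaStar (m₁ m₂ : ℕ) : ℝ :=
  Real.arctan (Real.sqrt ((m₁ : ℝ) / (m₂ : ℝ)))

/-- `l(θ) = m₁ cos² θ - m₂ sin² θ`. -/
noncomputable def lfun (m₁ m₂ : ℕ) (θ : ℝ) : ℝ :=
  (m₁ : ℝ) * Real.cos θ ^ 2 - (m₂ : ℝ) * Real.sin θ ^ 2

/-- `(ξ, θ, α)` is a (globally defined) solution of the ODE system (*):
`ξ' = cos α · sin 2θ`, `θ' = sin α · sin 2θ`,
`α' = sin α · sin 2θ · (exp((4/g)ξ) - m) + 2 cos α · l(θ)`. -/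
def IsSolution (g m₁ m₂ : ℕ) (ξ θ α : ℝ → ℝ) : Prop :=
  ∀ t : ℝ,
    HasDerivAt ξ (Real.cos (α t) * Real.sin (2 * θ t)) t ∧
    HasDerivAt θ (Real.sin (α t) * Real.sin (2 * θ t)) t ∧
    HasDerivAt α
      (Real.sin (α t) * Real.sin (2 * θ t) *
          (Real.exp (4 / (g : ℝ) * ξ t) - mconst g m₁ m₂) +
        2 * Real.cos (α t) * lfun m₁ m₂ (θ t)) t

/-- The autonomous vector field of the system (*). -/
noncomputable def Fvec (c M a b : ℝ) (p : ℝ × ℝ × ℝ) : ℝ × ℝ × ℝ :=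
  (Real.cos p.2.2 * Real.sin (2 * p.2.1),
   Real.sin p.2.2 * Real.sin (2 * p.2.1),
   Real.sin p.2.2 * Real.sin (2 * p.2.1) * (Real.exp (c * p.1) - M) +
     2 * Real.cos p.2.2 * (a * Real.cos p.2.1 ^ 2 - b * Real.sin p.2.1 ^ 2))

lemma contDiff_Fvec (c M a b : ℝ) : ContDiff ℝ 1 (Fvec c M a b) := by
  have h1 : ContDiff ℝ 1 (fun p : ℝ × ℝ × ℝ => p.1) := contDiff_fst
  have h21 : ContDiff ℝ 1 (fun p : ℝ × ℝ × ℝ => p.2.1) := contDiff_fst.comp contDiff_snd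
  have h22 : ContDiff ℝ 1 (fun p : ℝ × ℝ × ℝ => p.2.2) := contDiff_snd.comp contDiff_snd
  have hc : ContDiff ℝ 1 (fun p : ℝ × ℝ × ℝ => Real.cos p.2.2) := h22.cos
  have hs : ContDiff ℝ 1 (fun p : ℝ × ℝ × ℝ => Real.sin p.2.2) := h22.sin
  have hs2 : ContDiff ℝ 1 (fun p : ℝ × ℝ × ℝ => Real.sin (2 * p.2.1)) := (contDiff_const.mul h21).sin
  have hcθ : ContDiff ℝ 1 (fun p : ℝ × ℝ × ℝ => Real.cos p.2.1) := h21.cos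
  have hsθ : ContDiff ℝ 1 (fun p : ℝ × ℝ × ℝ => Real.sin p.2.1) := h21.sin
  have hexp : ContDiff ℝ 1 (fun p : ℝ × ℝ × ℝ => Real.exp (c * p.1)) := (contDiff_const.mul h1).exp
  exact (hc.mul hs2).prodMk ((hs.mul hs2).prodMk
    (((hs.mul hs2).mul (hexp.sub contDiff_const)).add
      ((contDiff_const.mul hc).mul ((contDiff_const.mul (hcθ.pow 2)).sub
        (contDiff_const.mul (hsθ.pow 2))))))

/-- Global uniqueness of solutions of an autonomous ODE with `C¹` field. -/
lemma ode_uniq {E : Type*} [NormedAddCommGroup E] [NormedSpace ℝ E]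
    {F : E → E} (hF : ContDiff ℝ 1 F) {f g : ℝ → E}
    (hf : ∀ t, HasDerivAt f (F (f t)) t) (hg : ∀ t, HasDerivAt g (F (g t)) t)
    {t₀ : ℝ} (h0 : f t₀ = g t₀) : ∀ t, f t = g t := by
  have hfc : Continuous f := continuous_iff_continuousAt.2 fun t => (hf t).continuousAt
  have hgc : Continuous g := continuous_iff_continuousAt.2 fun t => (hg t).continuousAt
  have hclosed : IsClosed {t : ℝ | f t = g t} := isClosed_eq hfc hgc
  have hopen : IsOpen {t : ℝ | f t = g t} := by
    rw [isOpen_iff_mem_nhds]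
    intro t₁ ht₁
    obtain ⟨K, s, hs, hlip⟩ := (hF.contDiffAt (x := f t₁)).exists_lipschitzOnWith
    have hfs : ∀ᶠ t in nhds t₁, f t ∈ s := hfc.continuousAt.preimage_mem_nhds hs
    have hgs : ∀ᶠ t in nhds t₁, g t ∈ s := by
      have he : f t₁ = g t₁ := ht₁
      exact hgc.continuousAt.preimage_mem_nhds (he ▸ hs)
    have huniq : f =ᶠ[nhds t₁] g :=
      ODE_solution_unique_of_eventually (v := fun _ => F) (s := fun _ => s)
        (Filter.Eventually.of_forall fun _ => hlip)
        (hfs.mono fun t ht => ⟨hf t, ht⟩) (hgs.mono fun t ht => ⟨hg t, ht⟩) ht₁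
    exact huniq
  have huniv : {t : ℝ | f t = g t} = Set.univ :=
    IsClopen.eq_univ ⟨hclosed, hopen⟩ ⟨t₀, h0⟩
  exact fun t => Set.eq_univ_iff_forall.mp huniv t

/-- Criterion for periodicity: if `m₁ = m₂`, `x ∈ 𝒟` is a fixed point of `S`
and the solution `γ` through `x` satisfies `S(γ(T)) = γ(T) + (0, 0, 2πk)` for
some `T ≠ 0`, `k ∈ ℤ`, then the `ξ` and `θ` components of `γ` are periodic
with period `2T`. -/
theorem stmt5 (g m₁ m₂ : ℕ) (hg : g = 1 ∨ g = 2 ∨ g = 3 ∨ g = 4 ∨ g = 6)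
    (hm₁ : 0 < m₁) (hm₂ : 0 < m₂)
    (hm : m₁ = m₂) (ξ θ α : ℝ → ℝ) (hsol : IsSolution g m₁ m₂ ξ θ α)
    (hD : θ 0 ∈ Set.Ioo 0 (Real.pi / 2))
    (hfix : θ 0 = 2 * thetaStar m₁ m₂ - θ 0 ∧ α 0 = Real.pi - α 0)
    (T : ℝ) (hT : T ≠ 0) (k : ℤ)
    (hS : ξ T = ξ T ∧ 2 * thetaStar m₁ m₂ - θ T = θ T ∧
      Real.pi - α T = α T + 2 * Real.pi * k) :
    ∀ t : ℝ, ξ (t + 2 * T) = ξ t ∧ θ (t + 2 * T) = θ t := by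
  subst hm
  have hθs : 2 * thetaStar m₁ m₁ = Real.pi / 2 := by
    unfold thetaStar
    rw [div_self (by exact_mod_cast hm₁.ne' : (m₁ : ℝ) ≠ 0), Real.sqrt_one, Real.arctan_one]
    ring
  have hF := contDiff_Fvec (4 / (g : ℝ)) (mconst g m₁ m₁) (m₁ : ℝ) (m₁ : ℝ)
  -- the solution as a curve in ℝ³
  have hf : ∀ t, HasDerivAt (fun t => ((ξ t, θ t, α t) : ℝ × ℝ × ℝ))
      (Fvec (4 / (g : ℝ)) (mconst g m₁ m₁) (m₁ : ℝ) (m₁ : ℝ) (ξ t, θ t, α t)) t := by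
    intro t
    obtain ⟨h1, h2, h3⟩ := hsol t
    have := h1.prodMk (h2.prodMk h3)
    exact this
  -- the reflection at time 0
  have hg1 : ∀ t, HasDerivAt (fun t => ((ξ (-t), Real.pi / 2 - θ (-t), Real.pi - α (-t)) : ℝ × ℝ × ℝ))
      (Fvec (4 / (g : ℝ)) (mconst g m₁ m₁) (m₁ : ℝ) (m₁ : ℝ)
        (ξ (-t), Real.pi / 2 - θ (-t), Real.pi - α (-t))) t := by
    intro t
    obtain ⟨h1, h2, h3⟩ := hsol (-t)
    have hn : HasDerivAt (fun s : ℝ => -s) (-1 : ℝ) t := hasDerivAt_neg t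
    have H1 := h1.comp t hn
    have H2 := (h2.comp t hn).const_sub (Real.pi / 2)
    have H3 := (h3.comp t hn).const_sub Real.pi
    have := H1.prodMk (H2.prodMk H3)
    convert this using 1
    · rfl
    have e : 2 * (Real.pi / 2 - θ (-t)) = Real.pi - 2 * θ (-t) := by ring
    simp only [Fvec, lfun, Prod.mk.injEq]
    rw [e, Real.cos_pi_sub, Real.sin_pi_sub, Real.sin_pi_sub,
      Real.cos_pi_div_two_sub, Real.sin_pi_div_two_sub]
    refine ⟨by ring, by ring, by ring⟩
  -- the (shifted) reflection at time T
  have hg2 : ∀ t, HasDerivAt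
      (fun t => ((ξ (2 * T - t), Real.pi / 2 - θ (2 * T - t),
        Real.pi - 2 * Real.pi * k - α (2 * T - t)) : ℝ × ℝ × ℝ))
      (Fvec (4 / (g : ℝ)) (mconst g m₁ m₁) (m₁ : ℝ) (m₁ : ℝ)
        (ξ (2 * T - t), Real.pi / 2 - θ (2 * T - t), Real.pi - 2 * Real.pi * k - α (2 * T - t))) t := by
    intro t
    obtain ⟨h1, h2, h3⟩ := hsol (2 * T - t)
    have hn : HasDerivAt (fun s : ℝ => 2 * T - s) (-1 : ℝ) t := by
      simpa using (hasDerivAt_id t).const_sub (2 * T)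
    have H1 := h1.comp t hn
    have H2 := (h2.comp t hn).const_sub (Real.pi / 2)
    have H3 := (h3.comp t hn).const_sub (Real.pi - 2 * Real.pi * k)
    have := H1.prodMk (H2.prodMk H3)
    convert this using 1
    · rfl
    have e : 2 * (Real.pi / 2 - θ (2 * T - t)) = Real.pi - 2 * θ (2 * T - t) := by ring
    have e2 : Real.pi - 2 * Real.pi * (k : ℝ) - α (2 * T - t)
        = (Real.pi - α (2 * T - t)) + ((-k : ℤ) : ℝ) * (2 * Real.pi) := by
      push_cast
      ring
    simp only [Fvec, lfun, Prod.mk.injEq]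
    rw [e, e2, Real.cos_add_int_mul_two_pi, Real.sin_add_int_mul_two_pi,
      Real.cos_pi_sub, Real.sin_pi_sub, Real.sin_pi_sub,
      Real.cos_pi_div_two_sub, Real.sin_pi_div_two_sub]
    refine ⟨by ring, by ring, by ring⟩
  -- equality at time 0
  have E0 : ((ξ (0:ℝ), θ 0, α 0) : ℝ × ℝ × ℝ) = (ξ (-(0:ℝ)), Real.pi / 2 - θ (-(0:ℝ)), Real.pi - α (-(0:ℝ))) := by
    rw [neg_zero]
    refine Prod.ext rfl (Prod.ext ?_ ?_) <;> simp only
    · linarith [hfix.1, hθs]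
    · linarith [hfix.2]
  -- equality at time T
  have ET : ((ξ T, θ T, α T) : ℝ × ℝ × ℝ) =
      (ξ (2 * T - T), Real.pi / 2 - θ (2 * T - T), Real.pi - 2 * Real.pi * k - α (2 * T - T)) := by
    have e : 2 * T - T = T := by ring
    rw [e]
    refine Prod.ext rfl (Prod.ext ?_ ?_) <;> simp only
    · linarith [hS.2.1, hθs]
    · linarith [hS.2.2]
  have key1 := ode_uniq hF hf hg1 E0
  have key2 := ode_uniq hF hf hg2 ET
  intro t
  have h2 := key2 (t + 2 * T)
  have h0 := key1 t
  rw [show 2 * T - (t + 2 * T) = -t by ring] at h2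
  simp only [Prod.mk.injEq] at h2 h0
  exact ⟨h2.1.trans h0.1.symm, by linarith [h2.2.1, h0.2.1]⟩
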